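/- Let G = H(k, n_0, ..., n_{k-1}) with Σ_{i=1}^{k-1} n_i ≥ 2, and let G' be the consolidation of G. Then the number of acyclic orientations strictly decreases: a(G') < a(G). -/

import Mathlib

open SimpleGraph

def graphH (k : ℕ) (ns : ℕ → ℕ) :
    SimpleGraph (Fin k ⊕ Σ i : Fin k, Fin (ns i.val)) where
  Adj a b :=
    match a, b with
    | Sum.inl u, Sum.inl v => u ≠ v
    | Sum.inl u, Sum.inr p => u.val < p.1.val
    | Sum.inr p, Sum.inl u => u.val < p.1.val
    | Sum.inr _, Sum.inr _ => False
  symm := by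
    constructor
    rintro (u | p) (v | q) h
    · exact h.symm
    · exact h
    · exact h
    · exact h
  loopless := by
    constructor
    rintro (u | p) h
    · exact h rfl
    · exact h

/-- The clique size of the consolidation of `H(k, n_0, …, n_{k-1})` with largest relevant
index `l`: if `l = k - 1` the vertex receiving degree `k` is absorbed into the clique. -/
def consolK (k l : ℕ) : ℕ := if l = k - 1 then k + 1 else k

/-- The degree sequence of the consolidation: `n_s` and `n_l` are decreased by one and
`n_{s-1}` and `n_{l+1}` are increased by one (no vertex of degree `l + 1 = k` is recorded,
since such a vertex is absorbed into the clique). -/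
def consolNs (k : ℕ) (ns : ℕ → ℕ) (s l : ℕ) : ℕ → ℕ := fun i =>
  (if i = s - 1 then 1 else 0) + (if l + 1 < k ∧ i = l + 1 then 1 else 0) + ns i
    - (if i = s then 1 else 0) - (if i = l then 1 else 0)

/-- The data of a nontrivial consolidation move on `H(k, n_0, …, n_{k-1})`:  `k ≥ 1`, only
`n_0, …, n_{k-1}` are (possibly) nonzero, `Σ_{i=1}^{k-1} n_i ≥ 2`, `s` is the least index
`i ≥ 1` with `n_i > 0`, and `l` is the greatest index `i ≤ k - 1` with `n_i > 0`. -/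
def IsConsolData (k : ℕ) (ns : ℕ → ℕ) (s l : ℕ) : Prop :=
  1 ≤ k ∧ (∀ i, k ≤ i → ns i = 0) ∧ 2 ≤ ∑ i ∈ Finset.Ico 1 k, ns i ∧
    1 ≤ s ∧ ns s ≠ 0 ∧ (∀ i, 1 ≤ i → i < s → ns i = 0) ∧
    ns l ≠ 0 ∧ (∀ i, l < i → i < k → ns i = 0)

/-- An orientation of a simple graph `G`: a relation `θ` on the vertices such that for adjacent
vertices exactly one of `θ a b`, `θ b a` holds, and for non-adjacent (or equal) vertices
neither holds. -/
def IsOrientation {V : Type*} (G : SimpleGraph V) (θ : V → V → Prop) : Prop :=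
  ∀ a b : V, (G.Adj a b → (θ a b ↔ ¬ θ b a)) ∧ (¬ G.Adj a b → ¬ θ a b)

/-- A relation is acyclic if its digraph has no directed cycle, i.e. its transitive closure is
irreflexive. -/
def RelAcyclic {V : Type*} (θ : V → V → Prop) : Prop :=
  ∀ v, ¬ Relation.TransGen θ v v

/-- `a(G)`, the number of acyclic orientations of `G`. -/
noncomputable def numAcyclicOrientations {V : Type*} (G : SimpleGraph V) : ℕ :=
  Nat.card {θ : V → V → Prop // IsOrientation G θ ∧ RelAcyclic θ}


open Finset

namespace ConsolAux

lemma card_filter_val_lt (k i : ℕ) (h : i ≤ k) :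
    ((Finset.univ : Finset (Fin k)).filter fun w => w.val < i).card = i := by
  classical
  rw [← Finset.card_map Fin.valEmbedding]
  have h1 : (((Finset.univ : Finset (Fin k)).filter fun w => w.val < i).map Fin.valEmbedding)
      = ((Finset.univ : Finset (Fin k)).map Fin.valEmbedding).filter fun x => x < i := by
    rw [Finset.filter_map]; rfl
  rw [h1, Fin.map_valEmbedding_univ]
  have h2 : (Finset.Iio k).filter (fun x => x < i) = Finset.Iio i := by
    ext x; simp only [Finset.mem_filter, Finset.mem_Iio]; omega
  rw [h2, Nat.card_Iio]

def rk {k : ℕ} (π : Equiv.Perm (Fin k)) (i : ℕ) (u : Fin k) : ℕ :=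
  ((Finset.univ : Finset (Fin k)).filter fun w => w.val < i ∧ π w < π u).card

lemma rk_lt {k : ℕ} (π : Equiv.Perm (Fin k)) {i : ℕ} (hik : i ≤ k) {u : Fin k}
    (hu : u.val < i) : rk π i u < i := by
  have h1 : ((Finset.univ : Finset (Fin k)).filter fun w => w.val < i ∧ π w < π u)
      ⊆ (Finset.univ : Finset (Fin k)).filter fun w => w.val < i :=
    Finset.monotone_filter_right _ (fun w _ hw => hw.1)
  have h2 : ((Finset.univ : Finset (Fin k)).filter fun w => w.val < i ∧ π w < π u)
      ⊂ (Finset.univ : Finset (Fin k)).filter fun w => w.val < i := by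
    refine (Finset.ssubset_iff_of_subset h1).mpr ⟨u, ?_, ?_⟩
    · simp [hu]
    · simp
  calc rk π i u < ((Finset.univ : Finset (Fin k)).filter fun w => w.val < i).card :=
        Finset.card_lt_card h2
    _ = i := card_filter_val_lt k i hik

lemma rk_lt_rk {k : ℕ} (π : Equiv.Perm (Fin k)) {i : ℕ} {u w : Fin k}
    (hu : u.val < i) (hw : w.val < i) (h : π u < π w) : rk π i u < rk π i w := by
  apply Finset.card_lt_card
  refine (Finset.ssubset_iff_of_subset
    (Finset.monotone_filter_right _ (fun x _ hx => ⟨hx.1, hx.2.trans h⟩))).mpr ⟨u, ?_, ?_⟩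
  · simp [hu, h]
  · simp

lemma pi_lt_of_rk_lt {k : ℕ} (π : Equiv.Perm (Fin k)) {i : ℕ} {u w : Fin k}
    (hu : u.val < i) (hw : w.val < i) (h : rk π i u < rk π i w) : π u < π w := by
  rcases lt_trichotomy (π u) (π w) with h' | h' | h'
  · exact h'
  · exact absurd h (by rw [show u = w from π.injective (Fin.ext (by exact congrArg Fin.val h'))]; omega)
  · exact absurd h (by have := rk_lt_rk π hw hu h'; omega)

lemma card_rk_lt {k : ℕ} (π : Equiv.Perm (Fin k)) {i : ℕ} (hik : i ≤ k) {t : ℕ} (ht : t ≤ i) :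
    ((Finset.univ : Finset (Fin k)).filter fun u => u.val < i ∧ rk π i u < t).card = t := by
  classical
  set A := (Finset.univ : Finset (Fin k)).filter fun w => w.val < i with hA
  have hcardA : A.card = i := card_filter_val_lt k i hik
  have hmemA : ∀ u : Fin k, u ∈ A ↔ u.val < i := by intro u; simp [hA]
  have hinj : Set.InjOn (rk π i) A := by
    intro u hu w hw huw
    rw [Finset.mem_coe, hmemA] at hu hw
    by_contra hne
    rcases Ne.lt_or_gt (show π u ≠ π w from fun h => hne (π.injective h)) with hlt | hlt
    · exact absurd huw (Nat.ne_of_lt (rk_lt_rk π hu hw hlt))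
    · exact absurd huw.symm (Nat.ne_of_lt (rk_lt_rk π hw hu hlt))
  have himg : A.image (rk π i) = Finset.range i := by
    apply Finset.eq_of_subset_of_card_le
    · intro x hx
      rcases Finset.mem_image.mp hx with ⟨u, hu, rfl⟩
      exact Finset.mem_range.mpr (rk_lt π hik ((hmemA u).mp hu))
    · rw [Finset.card_range, Finset.card_image_of_injOn hinj, hcardA]
  have hB : ((Finset.univ : Finset (Fin k)).filter fun u => u.val < i ∧ rk π i u < t)
      = A.filter fun u => rk π i u < t := by
    simp [hA, Finset.filter_filter]
  rw [hB]
  have hinj2 : Set.InjOn (rk π i) (A.filter fun u => rk π i u < t) :=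
    hinj.mono (by intro x hx; exact Finset.mem_coe.mpr (Finset.mem_of_mem_filter _ (Finset.mem_coe.mp hx)))
  have himg2 : (A.filter fun u => rk π i u < t).image (rk π i) = Finset.range t := by
    rw [← Finset.filter_image (p := fun x => x < t), himg]
    ext x; simp only [Finset.mem_filter, Finset.mem_range]; omega
  rw [← Finset.card_image_of_injOn hinj2, himg2, Finset.card_range]


section Graph

open SimpleGraph Sum

variable {k : ℕ} {ns : ℕ → ℕ}

abbrev Pend (k : ℕ) (ns : ℕ → ℕ) := Σ i : Fin k, Fin (ns i.val)
abbrev Vtx (k : ℕ) (ns : ℕ → ℕ) := Fin k ⊕ Pend k ns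
abbrev Param (k : ℕ) (ns : ℕ → ℕ) := Equiv.Perm (Fin k) × Π p : Pend k ns, Fin (p.1.val + 1)

def toRel (π : Equiv.Perm (Fin k)) (t : Π p : Pend k ns, Fin (p.1.val + 1)) :
    Vtx k ns → Vtx k ns → Prop := fun a b =>
  match a, b with
  | .inl u, .inl v => π u < π v
  | .inl u, .inr p => u.val < p.1.val ∧ rk π p.1.val u < (t p).val
  | .inr p, .inl u => u.val < p.1.val ∧ (t p).val ≤ rk π p.1.val u
  | .inr _, .inr _ => False

lemma toRel_isOrientation (π : Equiv.Perm (Fin k)) (t : Π p : Pend k ns, Fin (p.1.val + 1)) :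
    IsOrientation (graphH k ns) (toRel π t) := by
  rintro (u | p) (v | q)
  · constructor
    · intro hadj
      have hne : π u ≠ π v := fun h => hadj (π.injective h)
      simp only [toRel]
      rcases hne.lt_or_gt with h | h
      · simp [h, h.asymm]
      · simp [h, h.asymm]
    · intro hadj
      have : u = v := by_contra fun h => hadj h
      subst this
      simp [toRel]
  · constructor
    · intro hadj
      have hadj' : u.val < q.1.val := hadj
      simp [toRel, hadj']
    · intro hadj
      have : ¬ u.val < q.1.val := hadj
      simp [toRel, this]
  · constructor
    · intro hadj
      have hadj' : v.val < p.1.val := hadj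
      simp [toRel, hadj']
    · intro hadj
      have : ¬ v.val < p.1.val := hadj
      simp [toRel, this]
  · exact ⟨fun h => absurd h (by simp [graphH]), fun _ => by simp [toRel]⟩

def outSet (π : Equiv.Perm (Fin k)) (t : Π p : Pend k ns, Fin (p.1.val + 1))
    (p : Pend k ns) : Finset (Fin k) :=
  (Finset.univ : Finset (Fin k)).filter fun w => w.val < p.1.val ∧ (t p).val ≤ rk π p.1.val w

noncomputable def outMin (π : Equiv.Perm (Fin k)) (t : Π p : Pend k ns, Fin (p.1.val + 1))
    (p : Pend k ns) : ℤ :=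
  if h : (outSet π t p).Nonempty then
    ((outSet π t p).image fun w => ((π w).val : ℤ)).min' (h.image _)
  else (k : ℤ) + 1

lemma lt_outMin (π : Equiv.Perm (Fin k)) (t : Π p : Pend k ns, Fin (p.1.val + 1))
    (p : Pend k ns) {x : ℕ} (hx : x < k)
    (h : ∀ w ∈ outSet π t p, x < (π w).val) : (x : ℤ) < outMin π t p := by
  unfold outMin
  split_ifs with hne
  · obtain ⟨w, hw, hwe⟩ := Finset.mem_image.mp
      (Finset.min'_mem ((outSet π t p).image fun w => ((π w).val : ℤ)) (hne.image _))
    have := h w hw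
    omega
  · omega

lemma outMin_le (π : Equiv.Perm (Fin k)) (t : Π p : Pend k ns, Fin (p.1.val + 1))
    (p : Pend k ns) {w : Fin k} (hw : w ∈ outSet π t p) : outMin π t p ≤ ((π w).val : ℤ) := by
  unfold outMin
  rw [dif_pos ⟨w, hw⟩]
  exact Finset.min'_le _ _ (Finset.mem_image_of_mem _ hw)

noncomputable def ht (π : Equiv.Perm (Fin k)) (t : Π p : Pend k ns, Fin (p.1.val + 1)) :
    Vtx k ns → ℤ
  | .inl u => 2 * (π u).val
  | .inr p => 2 * outMin π t p - 1

lemma ht_step (π : Equiv.Perm (Fin k)) (t : Π p : Pend k ns, Fin (p.1.val + 1))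
    {a b : Vtx k ns} (hab : toRel π t a b) : ht π t a < ht π t b := by
  match a, b with
  | .inl u, .inl v =>
    have : π u < π v := hab
    simp only [ht]
    omega
  | .inl u, .inr p =>
    obtain ⟨hu, hr⟩ := hab
    simp only [ht]
    have hlt : ((π u).val : ℤ) < outMin π t p := by
      refine lt_outMin π t p (π u).isLt ?_
      intro w hw
      rw [outSet, Finset.mem_filter] at hw
      exact pi_lt_of_rk_lt π hu hw.2.1 (lt_of_lt_of_le hr hw.2.2)
    omega
  | .inr p, .inl u =>
    obtain ⟨hu, hr⟩ := hab
    simp only [ht]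
    have hmem : u ∈ outSet π t p := by
      rw [outSet, Finset.mem_filter]; exact ⟨Finset.mem_univ _, hu, hr⟩
    have := outMin_le π t p hmem
    omega

lemma toRel_acyclic (π : Equiv.Perm (Fin k)) (t : Π p : Pend k ns, Fin (p.1.val + 1)) :
    RelAcyclic (toRel (ns := ns) π t) := by
  intro v hv
  have key : ∀ a b : Vtx k ns, Relation.TransGen (toRel π t) a b → ht π t a < ht π t b := by
    intro a b hab
    induction hab with
    | single h => exact ht_step π t h
    | tail _ h ih => exact ih.trans (ht_step π t h)
  exact absurd (key v v hv) (lt_irrefl _)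


end Graph

section Inverse

variable {k : ℕ} {ns : ℕ → ℕ} (θ : Vtx k ns → Vtx k ns → Prop)

lemma theta_irrefl (hacyc : RelAcyclic θ) (a : Vtx k ns) : ¬ θ a a :=
  fun h => hacyc a (.single h)

lemma theta_asymm (hacyc : RelAcyclic θ) {a b : Vtx k ns} (h : θ a b) : ¬ θ b a :=
  fun h' => hacyc a (.head h (.single h'))

lemma theta_no3 (hacyc : RelAcyclic θ) {a b c : Vtx k ns} (h1 : θ a b) (h2 : θ b c) :
    ¬ θ c a := fun h3 => hacyc a (.head h1 (.head h2 (.single h3)))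

lemma theta_total (horient : IsOrientation (graphH k ns) θ) {u v : Fin k} (huv : u ≠ v)
    (h : ¬ θ (.inl u) (.inl v)) : θ (.inl v) (.inl u) := by
  by_contra h'
  exact h (((horient (.inl u) (.inl v)).1 huv).mpr h')

lemma theta_trans (horient : IsOrientation (graphH k ns) θ) (hacyc : RelAcyclic θ)
    {u v w : Fin k} (h1 : θ (.inl u) (.inl v)) (h2 : θ (.inl v) (.inl w)) :
    θ (.inl u) (.inl w) := by
  have huw : u ≠ w := by
    rintro rfl
    exact theta_asymm θ hacyc h1 h2
  by_contra h
  exact theta_no3 θ hacyc h1 h2 (theta_total θ horient huw h)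

lemma theta_adj_pend (horient : IsOrientation (graphH k ns) θ) {u : Fin k} {p : Pend k ns}
    (h : θ (.inl u) (.inr p)) : u.val < p.1.val := by
  by_contra h'
  exact (horient (.inl u) (.inr p)).2 h' h

lemma theta_adj_pend' (horient : IsOrientation (graphH k ns) θ) {u : Fin k} {p : Pend k ns}
    (h : θ (.inr p) (.inl u)) : u.val < p.1.val := by
  by_contra h'
  exact (horient (.inr p) (.inl u)).2 h' h

open scoped Classical in
noncomputable def rho (u : Fin k) : ℕ :=
  ((Finset.univ : Finset (Fin k)).filter fun w => θ (.inl w) (.inl u)).card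

lemma rho_lt (hacyc : RelAcyclic θ) (u : Fin k) : rho θ u < k := by
  classical
  have h1 : ((Finset.univ : Finset (Fin k)).filter fun w => θ (.inl w) (.inl u))
      ⊂ Finset.univ := by
    refine Finset.filter_ssubset.mpr ⟨u, Finset.mem_univ _, theta_irrefl θ hacyc _⟩
  calc rho θ u < (Finset.univ : Finset (Fin k)).card := Finset.card_lt_card h1
    _ = k := by simp

lemma rho_mono (horient : IsOrientation (graphH k ns) θ) (hacyc : RelAcyclic θ)
    {u v : Fin k} (h : θ (.inl u) (.inl v)) : rho θ u < rho θ v := by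
  classical
  apply Finset.card_lt_card
  refine (Finset.ssubset_iff_of_subset (Finset.monotone_filter_right _
    (fun w _ hw => theta_trans θ horient hacyc hw h))).mpr ⟨u, ?_, ?_⟩
  · simp [h]
  · simp [theta_irrefl θ hacyc]

lemma rho_lt_iff (horient : IsOrientation (graphH k ns) θ) (hacyc : RelAcyclic θ)
    (u v : Fin k) : rho θ u < rho θ v ↔ θ (.inl u) (.inl v) := by
  constructor
  · intro h
    by_contra h'
    rcases eq_or_ne u v with rfl | hne
    · omega
    · exact absurd h (by have := rho_mono θ horient hacyc (theta_total θ horient hne h'); omega)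
  · exact rho_mono θ horient hacyc

noncomputable def permOf (horient : IsOrientation (graphH k ns) θ) (hacyc : RelAcyclic θ) :
    Equiv.Perm (Fin k) :=
  Equiv.ofBijective (fun u => (⟨rho θ u, rho_lt θ hacyc u⟩ : Fin k))
    (Finite.injective_iff_bijective.mp (by
      intro u v huv
      by_contra hne
      have h1 : rho θ u = rho θ v := congrArg Fin.val huv
      rcases eq_or_ne u v with rfl | hne'
      · exact hne rfl
      · by_cases h : θ (.inl u) (.inl v)
        · exact absurd h1 (Nat.ne_of_lt (rho_mono θ horient hacyc h))
        · exact absurd h1.symm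
            (Nat.ne_of_lt (rho_mono θ horient hacyc (theta_total θ horient hne' h)))))

lemma permOf_lt_iff (horient : IsOrientation (graphH k ns) θ) (hacyc : RelAcyclic θ)
    (u v : Fin k) : permOf θ horient hacyc u < permOf θ horient hacyc v ↔ θ (.inl u) (.inl v) := by
  rw [show (permOf θ horient hacyc u < permOf θ horient hacyc v) ↔ (rho θ u < rho θ v) from Iff.rfl]
  exact rho_lt_iff θ horient hacyc u v

open scoped Classical in
noncomputable def tOf (horient : IsOrientation (graphH k ns) θ) (p : Pend k ns) :
    Fin (p.1.val + 1) := by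
  refine ⟨((Finset.univ : Finset (Fin k)).filter fun u => θ (.inl u) (.inr p)).card, ?_⟩
  have h1 : ((Finset.univ : Finset (Fin k)).filter fun u => θ (.inl u) (.inr p))
      ⊆ (Finset.univ : Finset (Fin k)).filter fun u => u.val < p.1.val :=
    Finset.monotone_filter_right _ (fun u _ hu => theta_adj_pend θ horient hu)
  have h2 := Finset.card_le_card h1
  rw [card_filter_val_lt k p.1.val (le_of_lt p.1.isLt)] at h2
  omega


open scoped Classical in
lemma rk_permOf (horient : IsOrientation (graphH k ns) θ) (hacyc : RelAcyclic θ)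
    (i : ℕ) (u : Fin k) :
    rk (permOf θ horient hacyc) i u
      = ((Finset.univ : Finset (Fin k)).filter fun w => w.val < i ∧ θ (.inl w) (.inl u)).card := by
  classical
  unfold rk
  apply Finset.card_nbij (fun a => a)
  · intro w hw
    simp only [Finset.mem_coe, Finset.mem_filter, Finset.mem_univ, true_and] at hw ⊢
    exact ⟨hw.1, (permOf_lt_iff θ horient hacyc w u).mp hw.2⟩
  · intro w hw w' hw' h
    exact h
  · intro w hw
    simp only [Set.mem_image, Finset.mem_coe, Finset.mem_filter, Finset.mem_univ, true_and] at hw ⊢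
    exact ⟨w, ⟨hw.1, (permOf_lt_iff θ horient hacyc w u).mpr hw.2⟩, rfl⟩

open scoped Classical in
lemma theta_pend_iff (horient : IsOrientation (graphH k ns) θ) (hacyc : RelAcyclic θ)
    (p : Pend k ns) (u : Fin k) (hu : u.val < p.1.val) :
    θ (.inl u) (.inr p) ↔
      ((Finset.univ : Finset (Fin k)).filter fun w => w.val < p.1.val ∧ θ (.inl w) (.inl u)).card
        < (tOf θ horient p).val := by
  classical
  have htval : (tOf θ horient p).val
      = ((Finset.univ : Finset (Fin k)).filter fun v => θ (.inl v) (.inr p)).card := rfl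
  set S := (Finset.univ : Finset (Fin k)).filter fun v => θ (.inl v) (.inr p) with hS
  set R := (Finset.univ : Finset (Fin k)).filter
    fun w => w.val < p.1.val ∧ θ (.inl w) (.inl u) with hR
  constructor
  · intro hup
    have hu_mem : u ∈ S := by rw [hS]; simp [hup]
    have hsub : R ⊆ S.erase u := by
      intro w hw
      rw [hR, Finset.mem_filter] at hw
      obtain ⟨-, hwv, hwu⟩ := hw
      refine Finset.mem_erase.mpr ⟨?_, ?_⟩
      · rintro rfl
        exact theta_irrefl θ hacyc _ hwu
      · have hwp : θ (.inl w) (.inr p) := by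
          by_contra hwp'
          have hpw : θ (.inr p) (.inl w) := by
            by_contra hpw
            exact hwp' (((horient (.inl w) (.inr p)).1 hwv).mpr hpw)
          exact theta_no3 θ hacyc hwu hup hpw
        rw [hS]; simp [hwp]
    have h1 := Finset.card_le_card hsub
    have h2 : (S.erase u).card = S.card - 1 := Finset.card_erase_of_mem hu_mem
    have h3 : 0 < S.card := Finset.card_pos.mpr ⟨u, hu_mem⟩
    rw [htval]
    omega
  · intro hcard
    by_contra hup
    have hpu : θ (.inr p) (.inl u) := by
      by_contra hpu
      exact hup (((horient (.inl u) (.inr p)).1 hu).mpr hpu)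
    have hsub : S ⊆ R := by
      intro w hw
      rw [hS, Finset.mem_filter] at hw
      have hwp := hw.2
      have hwv : w.val < p.1.val := theta_adj_pend θ horient hwp
      have hne : w ≠ u := by rintro rfl; exact hup hwp
      have hwu : θ (.inl w) (.inl u) := by
        by_contra hwu
        exact theta_no3 θ hacyc (theta_total θ horient hne hwu) hwp hpu
      rw [hR, Finset.mem_filter]
      exact ⟨Finset.mem_univ _, hwv, hwu⟩
    have := Finset.card_le_card hsub
    rw [htval] at hcard
    omega

lemma toRel_permOf (horient : IsOrientation (graphH k ns) θ) (hacyc : RelAcyclic θ) :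
    toRel (permOf θ horient hacyc) (tOf θ horient) = θ := by
  classical
  funext a b
  apply propext
  match a, b with
  | .inl u, .inl v =>
    exact permOf_lt_iff θ horient hacyc u v
  | .inl u, .inr p =>
    show (u.val < p.1.val ∧ _) ↔ _
    constructor
    · rintro ⟨hu, hr⟩
      rw [rk_permOf θ horient hacyc] at hr
      exact (theta_pend_iff θ horient hacyc p u hu).mpr hr
    · intro hup
      have hu := theta_adj_pend θ horient hup
      refine ⟨hu, ?_⟩
      rw [rk_permOf θ horient hacyc]
      exact (theta_pend_iff θ horient hacyc p u hu).mp hup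
  | .inr p, .inl u =>
    show (u.val < p.1.val ∧ _) ↔ _
    constructor
    · rintro ⟨hu, hr⟩
      rw [rk_permOf θ horient hacyc] at hr
      have hnup : ¬ θ (.inl u) (.inr p) := by
        intro hup
        have := (theta_pend_iff θ horient hacyc p u hu).mp hup
        omega
      by_contra hpu
      exact hnup (((horient (.inl u) (.inr p)).1 hu).mpr hpu)
    · intro hpu
      have hu := theta_adj_pend' θ horient hpu
      have hnup : ¬ θ (.inl u) (.inr p) := fun hup => theta_asymm θ hacyc hup hpu
      refine ⟨hu, ?_⟩
      rw [rk_permOf θ horient hacyc]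
      by_contra hlt
      exact hnup ((theta_pend_iff θ horient hacyc p u hu).mpr (by omega))
  | .inr p, .inr q =>
    exact ⟨False.elim, fun h => absurd h ((horient (.inr p) (.inr q)).2 id)⟩

end Inverse

section RightInv

variable {k : ℕ} {ns : ℕ → ℕ}

lemma rho_toRel (π : Equiv.Perm (Fin k)) (t : Π p : Pend k ns, Fin (p.1.val + 1)) (u : Fin k) :
    rho (toRel π t) u = (π u).val := by
  classical
  have h0 : rho (toRel π t) u
      = ((Finset.univ : Finset (Fin k)).filter fun w => π w < π u).card := by
    unfold rho
    apply Finset.card_nbij (fun a => a)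
    · intro w hw
      simp only [Finset.mem_coe, Finset.mem_filter, Finset.mem_univ, true_and] at hw ⊢
      exact hw
    · intro w _ w' _ h
      exact h
    · intro w hw
      simp only [Set.mem_image, Finset.mem_coe, Finset.mem_filter, Finset.mem_univ,
        true_and] at hw ⊢
      exact ⟨w, hw, rfl⟩
  rw [h0]
  have h1 : (((Finset.univ : Finset (Fin k)).filter fun w => π w < π u).map π.toEmbedding)
      = (Finset.univ : Finset (Fin k)).filter fun x => x.val < (π u).val := by
    have := Finset.filter_map (f := π.toEmbedding) (s := (Finset.univ : Finset (Fin k)))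
      (p := fun x : Fin k => x.val < (π u).val)
    rw [Finset.map_univ_equiv] at this
    rw [this]
    congr 1
  rw [← Finset.card_map π.toEmbedding, h1, card_filter_val_lt k (π u).val (le_of_lt (π u).isLt)]

lemma permOf_toRel (π : Equiv.Perm (Fin k)) (t : Π p : Pend k ns, Fin (p.1.val + 1))
    (horient : IsOrientation (graphH k ns) (toRel π t)) (hacyc : RelAcyclic (toRel π t)) :
    permOf (toRel π t) horient hacyc = π := by
  apply Equiv.ext
  intro u
  apply Fin.ext
  exact rho_toRel π t u

lemma tOf_toRel (π : Equiv.Perm (Fin k)) (t : Π p : Pend k ns, Fin (p.1.val + 1))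
    (horient : IsOrientation (graphH k ns) (toRel π t)) :
    tOf (toRel π t) horient = t := by
  classical
  funext p
  apply Fin.ext
  have h0 : (tOf (toRel π t) horient p).val
      = ((Finset.univ : Finset (Fin k)).filter
          fun u => u.val < p.1.val ∧ rk π p.1.val u < (t p).val).card := by
    show ((Finset.univ : Finset (Fin k)).filter fun u => toRel π t (.inl u) (.inr p)).card = _
    apply Finset.card_nbij (fun a => a)
    · intro w hw
      simp only [Finset.mem_coe, Finset.mem_filter, Finset.mem_univ, true_and] at hw ⊢
      exact hw
    · intro w _ w' _ h
      exact h
    · intro w hw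
      simp only [Set.mem_image, Finset.mem_coe, Finset.mem_filter, Finset.mem_univ,
        true_and] at hw ⊢
      exact ⟨w, hw, rfl⟩
  rw [h0, card_rk_lt π (le_of_lt p.1.isLt) (Nat.lt_succ_iff.mp (t p).isLt)]

end RightInv

section Count

variable (k : ℕ) (ns : ℕ → ℕ)

noncomputable def orientEquiv :
    {θ : Vtx k ns → Vtx k ns → Prop //
      IsOrientation (graphH k ns) θ ∧ RelAcyclic θ} ≃ Param k ns where
  toFun θ := (permOf θ.1 θ.2.1 θ.2.2, tOf θ.1 θ.2.1)
  invFun pt := ⟨toRel pt.1 pt.2, toRel_isOrientation pt.1 pt.2, toRel_acyclic pt.1 pt.2⟩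
  left_inv := by
    rintro ⟨θ, h1, h2⟩
    simp only [Subtype.mk.injEq]
    exact toRel_permOf θ h1 h2
  right_inv := by
    rintro ⟨π, t⟩
    have h1 := permOf_toRel π t (toRel_isOrientation π t) (toRel_acyclic π t)
    have h2 := tOf_toRel π t (toRel_isOrientation π t)
    exact Prod.ext h1 h2

theorem count_graphH :
    Nat.card {θ : Vtx k ns → Vtx k ns → Prop //
        IsOrientation (graphH k ns) θ ∧ RelAcyclic θ}
      = k.factorial * ∏ i ∈ Finset.range k, (i + 1) ^ ns i := by
  classical
  rw [Nat.card_congr (orientEquiv k ns), Nat.card_eq_fintype_card, Fintype.card_prod,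
    Fintype.card_perm, Fintype.card_fin, Fintype.card_pi]
  congr 1
  have h1 : ∏ p : Pend k ns, Fintype.card (Fin (p.1.val + 1))
      = ∏ i : Fin k, ∏ j : Fin (ns i.val), (i.val + 1) := by
    rw [← Finset.univ_sigma_univ, Finset.prod_sigma]
    simp
  rw [h1]
  have h2 : ∀ i : Fin k, ∏ _j : Fin (ns i.val), (i.val + 1) = (i.val + 1) ^ ns i.val := by
    intro i
    rw [Finset.prod_const, Finset.card_univ, Fintype.card_fin]
  simp only [h2]
  exact Fin.prod_univ_eq_prod_range (fun i => (i + 1) ^ ns i) k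

end Count

section Arith

lemma prod_pow_succ_add_ite (m j : ℕ) (hj : j < m) (f : ℕ → ℕ) :
    ∏ i ∈ Finset.range m, (i + 1) ^ (f i + if i = j then 1 else 0)
      = (∏ i ∈ Finset.range m, (i + 1) ^ f i) * (j + 1) := by
  simp only [pow_add]
  rw [Finset.prod_mul_distrib]
  congr 1
  have h : ∀ i, (i + 1) ^ (if i = j then 1 else 0) = if i = j then i + 1 else 1 := by
    intro i; split_ifs <;> simp
  simp only [h]
  rw [Finset.prod_ite_eq' (Finset.range m) j (fun i => i + 1)]
  simp [Finset.mem_range.mpr hj]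

end Arith


theorem numAcyclic_eq (k : ℕ) (ns : ℕ → ℕ) :
    numAcyclicOrientations (graphH k ns)
      = k.factorial * ∏ i ∈ Finset.range k, (i + 1) ^ ns i := by
  show Nat.card {θ : Vtx k ns → Vtx k ns → Prop //
      IsOrientation (graphH k ns) θ ∧ RelAcyclic θ} = _
  exact count_graphH k ns

end ConsolAux

open ConsolAux in
/-- The number of acyclic orientations is strictly decreased by (nontrivial) consolidation:
`a(G') < a(G)`. -/
theorem consolidation_lt_numAcyclicOrientations (k : ℕ) (ns : ℕ → ℕ) (s l : ℕ)
    (h : IsConsolData k ns s l) :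
    numAcyclicOrientations (graphH (consolK k l) (consolNs k ns s l))
      < numAcyclicOrientations (graphH k ns) := by
  obtain ⟨hk1, hbig, hsum, hs1, hss, hmin, hll, hmax⟩ := h
  have hlk : l < k := by
    by_contra h'
    exact hll (hbig l (le_of_not_gt h'))
  have hl1 : 1 ≤ l := by
    by_contra h'
    have hz : ∀ i ∈ Finset.Ico 1 k, ns i = 0 := by
      intro i hi
      rw [Finset.mem_Ico] at hi
      exact hmax i (by omega) hi.2
    rw [Finset.sum_eq_zero hz] at hsum
    omega
  have hsl : s ≤ l := by
    by_contra h'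
    exact hll (hmin l hl1 (by omega))
  have hsk : s < k := lt_of_le_of_lt hsl hlk
  have hnss : 1 ≤ ns s := Nat.one_le_iff_ne_zero.mpr hss
  have hnsl : 1 ≤ ns l := Nat.one_le_iff_ne_zero.mpr hll
  have hsl2 : s = l → 2 ≤ ns s := by
    intro hsleq
    have hsum2 : ∑ i ∈ Finset.Ico 1 k, ns i = ns s := by
      apply Finset.sum_eq_single_of_mem s (Finset.mem_Ico.mpr ⟨hs1, hsk⟩)
      intro b hb hbne
      rw [Finset.mem_Ico] at hb
      rcases lt_or_gt_of_ne hbne with h' | h'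
      · exact hmin b hb.1 h'
      · exact hmax b (by omega) hb.2
    omega
  have hpt : ∀ i, (consolNs k ns s l i + if i = s then 1 else 0) + (if i = l then 1 else 0)
      = (ns i + if i = s - 1 then 1 else 0) + (if l + 1 < k ∧ i = l + 1 then 1 else 0) := by
    intro i
    unfold consolNs
    rcases eq_or_ne i s with rfl | his
    · rcases eq_or_ne i l with rfl | hsl'
      · have := hsl2 rfl
        split_ifs <;> omega
      · split_ifs <;> omega
    · rcases eq_or_ne i l with rfl | hil
      · split_ifs <;> omega
      · split_ifs <;> omega
  rw [numAcyclic_eq, numAcyclic_eq]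
  by_cases hc : l + 1 < k
  · have hK : consolK k l = k := by
      unfold consolK
      rw [if_neg (by omega)]
    rw [hK]
    have e1 : (∏ i ∈ Finset.range k, (i + 1) ^ consolNs k ns s l i) * ((s + 1) * (l + 1))
        = (∏ i ∈ Finset.range k, (i + 1) ^ ns i) * (s * (l + 2)) := by
      calc (∏ i ∈ Finset.range k, (i + 1) ^ consolNs k ns s l i) * ((s + 1) * (l + 1))
          = ((∏ i ∈ Finset.range k, (i + 1) ^ consolNs k ns s l i) * (s + 1)) * (l + 1) := by
            ring
        _ = (∏ i ∈ Finset.range k,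
              (i + 1) ^ (consolNs k ns s l i + if i = s then 1 else 0)) * (l + 1) := by
            rw [prod_pow_succ_add_ite k s hsk]
        _ = ∏ i ∈ Finset.range k,
              (i + 1) ^ ((consolNs k ns s l i + if i = s then 1 else 0)
                + if i = l then 1 else 0) := by
            rw [prod_pow_succ_add_ite k l hlk]
        _ = ∏ i ∈ Finset.range k,
              (i + 1) ^ ((ns i + if i = s - 1 then 1 else 0) + if i = l + 1 then 1 else 0) := by
            refine Finset.prod_congr rfl fun i _ => ?_
            rw [hpt i]
            congr 1
            simp [hc]
        _ = (∏ i ∈ Finset.range k,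
              (i + 1) ^ (ns i + if i = s - 1 then 1 else 0)) * (l + 1 + 1) := by
            rw [prod_pow_succ_add_ite k (l + 1) hc]
        _ = ((∏ i ∈ Finset.range k, (i + 1) ^ ns i) * (s - 1 + 1)) * (l + 2) := by
            rw [prod_pow_succ_add_ite k (s - 1) (by omega)]
        _ = (∏ i ∈ Finset.range k, (i + 1) ^ ns i) * (s * (l + 2)) := by
            have hs' : s - 1 + 1 = s := by omega
            rw [hs']
            ring
    have key : (k.factorial * ∏ i ∈ Finset.range k, (i + 1) ^ consolNs k ns s l i)
          * ((s + 1) * (l + 1))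
        = (k.factorial * ∏ i ∈ Finset.range k, (i + 1) ^ ns i) * (s * (l + 2)) := by
      rw [mul_assoc, e1, ← mul_assoc]
    have hfac : s * (l + 2) < (s + 1) * (l + 1) := by nlinarith
    have hApos : 0 < k.factorial * ∏ i ∈ Finset.range k, (i + 1) ^ ns i := by positivity
    have h2 : (k.factorial * ∏ i ∈ Finset.range k, (i + 1) ^ consolNs k ns s l i)
          * ((s + 1) * (l + 1))
        < (k.factorial * ∏ i ∈ Finset.range k, (i + 1) ^ ns i) * ((s + 1) * (l + 1)) := by
      rw [key]
      exact (mul_lt_mul_iff_right₀ hApos).mpr hfac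
    exact lt_of_mul_lt_mul_right h2 (Nat.zero_le _)
  · have hK : consolK k l = k + 1 := by
      unfold consolK
      rw [if_pos (by omega)]
    rw [hK]
    have hl2 : l + 2 = k + 1 := by omega
    have hnsk : ns k = 0 := hbig k le_rfl
    have e1 : (∏ i ∈ Finset.range (k + 1), (i + 1) ^ consolNs k ns s l i) * ((s + 1) * (l + 1))
        = (∏ i ∈ Finset.range k, (i + 1) ^ ns i) * s := by
      calc (∏ i ∈ Finset.range (k + 1), (i + 1) ^ consolNs k ns s l i) * ((s + 1) * (l + 1))
          = ((∏ i ∈ Finset.range (k + 1), (i + 1) ^ consolNs k ns s l i) * (s + 1)) * (l + 1) := by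
            ring
        _ = (∏ i ∈ Finset.range (k + 1),
              (i + 1) ^ (consolNs k ns s l i + if i = s then 1 else 0)) * (l + 1) := by
            rw [prod_pow_succ_add_ite (k + 1) s (by omega)]
        _ = ∏ i ∈ Finset.range (k + 1),
              (i + 1) ^ ((consolNs k ns s l i + if i = s then 1 else 0)
                + if i = l then 1 else 0) := by
            rw [prod_pow_succ_add_ite (k + 1) l (by omega)]
        _ = ∏ i ∈ Finset.range (k + 1),
              (i + 1) ^ (ns i + if i = s - 1 then 1 else 0) := by
            refine Finset.prod_congr rfl fun i _ => ?_
            rw [hpt i]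
            congr 1
            simp [hc]
        _ = (∏ i ∈ Finset.range (k + 1), (i + 1) ^ ns i) * (s - 1 + 1) := by
            rw [prod_pow_succ_add_ite (k + 1) (s - 1) (by omega)]
        _ = (∏ i ∈ Finset.range k, (i + 1) ^ ns i) * s := by
            rw [Finset.prod_range_succ, hnsk, pow_zero, mul_one]
            congr 1
            omega
    have key : ((k + 1).factorial * ∏ i ∈ Finset.range (k + 1), (i + 1) ^ consolNs k ns s l i)
          * ((s + 1) * (l + 1))
        = (k.factorial * ∏ i ∈ Finset.range k, (i + 1) ^ ns i) * (s * (l + 2)) := by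
      rw [mul_assoc, e1, Nat.factorial_succ, hl2]
      ring
    have hfac : s * (l + 2) < (s + 1) * (l + 1) := by nlinarith
    have hApos : 0 < k.factorial * ∏ i ∈ Finset.range k, (i + 1) ^ ns i := by positivity
    have h2 : ((k + 1).factorial * ∏ i ∈ Finset.range (k + 1), (i + 1) ^ consolNs k ns s l i)
          * ((s + 1) * (l + 1))
        < (k.factorial * ∏ i ∈ Finset.range k, (i + 1) ^ ns i) * ((s + 1) * (l + 1)) := by
      rw [key]
      exact (mul_lt_mul_iff_right₀ hApos).mpr hfac
    exact lt_of_mul_lt_mul_right h2 (Nat.zero_le _)
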